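/- For every integer ν ≥ 1 and every positive integer r such that r · A_{k,j}(ν) is an integer for all nonnegative integers j ≤ k, the central-type binomial coefficient C(2ν−1, ν) divides r. In particular C(2ν−1,ν) divides r_ν. -/

import Mathlib

/-- `A ν k j` is the rational number `A_{k,j}(ν) = C(k,j)·(k+ν)!·ν! / ((k−j+ν)!·(j+ν)!)`. -/
def A (ν k j : ℕ) : ℚ :=
  (Nat.choose k j : ℚ) * ((k + ν).factorial : ℚ) * (ν.factorial : ℚ) /
    (((k - j + ν).factorial : ℚ) * ((j + ν).factorial : ℚ))

open Finset Nat fwdDiff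


lemma A_eq_zero {ν k m : ℕ} (h : k < m) : A ν k m = 0 := by
  simp [A, Nat.choose_eq_zero_of_lt h]

lemma A_mul_choose (ν k m : ℕ) :
    A ν k m * ((ν + m).choose m : ℚ) = (k.choose m : ℚ) * ((k + ν).choose m : ℚ) := by
  rcases lt_or_ge k m with hk | hk
  · simp [A_eq_zero hk, Nat.choose_eq_zero_of_lt hk]
  · have h1 : m ≤ ν + m := Nat.le_add_left m ν
    have h2 : m ≤ k + ν := le_trans hk (Nat.le_add_right k ν)
    have h3 : k + ν - m = k - m + ν := by omega
    rw [A, Nat.cast_choose ℚ h1, Nat.cast_choose ℚ h2, h3]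
    have e1 : ((k - m + ν).factorial : ℚ) ≠ 0 := Nat.cast_ne_zero.2 (Nat.factorial_ne_zero _)
    have e2 : ((m + ν).factorial : ℚ) ≠ 0 := Nat.cast_ne_zero.2 (Nat.factorial_ne_zero _)
    have e3 : ((ν + m).factorial : ℚ) ≠ 0 := Nat.cast_ne_zero.2 (Nat.factorial_ne_zero _)
    have e4 : (m.factorial : ℚ) ≠ 0 := Nat.cast_ne_zero.2 (Nat.factorial_ne_zero _)
    have e5 : (ν.factorial : ℚ) ≠ 0 := Nat.cast_ne_zero.2 (Nat.factorial_ne_zero _)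
    have e6 : ((ν + m).factorial : ℚ) = ((m + ν).factorial : ℚ) := by rw [Nat.add_comm]
    field_simp
    rw [e6]; simp only [Nat.add_sub_cancel, Nat.add_sub_cancel_left]; ring


lemma fwd_aux (m : ℕ) : ∀ c : ℕ, (Δ_[1])^[m] (fun t : ℕ => (((t + c).choose m : ℤ))) = fun _ => 1 := by
  induction m with
  | zero => intro c; simp
  | succ m ih =>
    intro c
    have hd : Δ_[1] (fun t : ℕ => (((t + c).choose (m+1) : ℤ))) =
        fun t : ℕ => (((t + c).choose m : ℤ)) := by
      funext t
      simp only [fwdDiff]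
      have : t + 1 + c = (t + c) + 1 := by omega
      rw [this, Nat.choose_succ_succ' (t + c) m]
      push_cast; ring
    rw [Function.iterate_succ_apply, hd, ih c]

lemma aux2 (m c : ℕ) :
    ∑ t ∈ range (m + 1), (-1 : ℤ) ^ t * (m.choose t) * ((t + c).choose m) = (-1) ^ m := by
  have h := fwdDiff_iter_eq_sum_shift (1 : ℕ) (fun t : ℕ => (((t + c).choose m : ℤ))) m 0
  rw [fwd_aux m c] at h
  have h2 : (1 : ℤ) = ∑ k ∈ range (m + 1), (-1 : ℤ) ^ (m - k) * (m.choose k) * ((k + c).choose m) := by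
    simpa [smul_eq_mul, mul_assoc] using h
  have h3 : ∀ k ∈ range (m + 1), (-1 : ℤ) ^ (m - k) * (m.choose k) * ((k + c).choose m)
      = (-1) ^ m * ((-1 : ℤ) ^ k * (m.choose k) * ((k + c).choose m)) := by
    intro k hk
    have hk' : k ≤ m := Nat.lt_succ_iff.mp (mem_range.mp hk)
    have : (-1 : ℤ) ^ (m - k) = (-1) ^ m * (-1) ^ k := by
      have : (-1 : ℤ) ^ (m - k) * (-1) ^ k = (-1) ^ m := by
        rw [← pow_add]; congr 1; omega
      have hki : ((-1 : ℤ) ^ k) * ((-1 : ℤ) ^ k) = 1 := by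
        rw [← pow_add]; exact Even.neg_one_pow ⟨k, rfl⟩
      calc (-1 : ℤ) ^ (m - k) = (-1 : ℤ) ^ (m - k) * ((-1) ^ k * (-1) ^ k) := by rw [hki, mul_one]
        _ = ((-1 : ℤ) ^ (m - k) * (-1) ^ k) * (-1) ^ k := by ring
        _ = (-1) ^ m * (-1) ^ k := by rw [this]
    rw [this]; ring
  rw [Finset.sum_congr rfl h3, ← Finset.mul_sum] at h2
  have hm : ((-1 : ℤ) ^ m) * ((-1 : ℤ) ^ m) = 1 := by rw [← pow_add]; exact Even.neg_one_pow ⟨m, rfl⟩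
  calc ∑ t ∈ range (m + 1), (-1 : ℤ) ^ t * (m.choose t) * ((t + c).choose m)
      = ((-1 : ℤ) ^ m * (-1) ^ m) * ∑ t ∈ range (m + 1), (-1 : ℤ) ^ t * (m.choose t) * ((t + c).choose m) := by
        rw [hm, one_mul]
    _ = (-1) ^ m * (1 : ℤ) := by rw [mul_assoc, ← h2]
    _ = (-1) ^ m := mul_one _

lemma idZ (ν m : ℕ) :
    ∑ k ∈ range (2 * m + 1), (-1 : ℤ) ^ k * ((2 * m).choose k) * (k.choose m * ((k + ν).choose m))
      = (2 * m).choose m := by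
  rw [range_eq_Ico, ← Finset.sum_Ico_consecutive _ (Nat.zero_le m) (by omega : m ≤ 2 * m + 1)]
  have h0 : ∑ k ∈ Ico 0 m, (-1 : ℤ) ^ k * ((2 * m).choose k) * (k.choose m * ((k + ν).choose m)) = 0 := by
    apply Finset.sum_eq_zero
    intro k hk
    have : k < m := (mem_Ico.mp hk).2
    simp [Nat.choose_eq_zero_of_lt this]
  rw [h0, zero_add, Finset.sum_Ico_eq_sum_range]
  have hlen : 2 * m + 1 - m = m + 1 := by omega
  rw [hlen]
  have hterm : ∀ t ∈ range (m + 1),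
      (-1 : ℤ) ^ (m + t) * ((2 * m).choose (m + t)) * ((m + t).choose m * ((m + t + ν).choose m))
      = ((2 * m).choose m : ℤ) * ((-1) ^ m * ((-1 : ℤ) ^ t * (m.choose t) * ((t + (m + ν)).choose m))) := by
    intro t ht
    have ht' : t ≤ m := Nat.lt_succ_iff.mp (mem_range.mp ht)
    have hc : (2 * m).choose (m + t) * (m + t).choose m = (2 * m).choose m * m.choose t := by
      have := Nat.choose_mul (n := 2 * m) (k := m + t) (s := m) (by omega)
      rw [this]
      congr 2 <;> omega
    have hcast : ((2 * m).choose (m + t) : ℤ) * ((m + t).choose m : ℤ)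
        = ((2 * m).choose m : ℤ) * (m.choose t : ℤ) := by exact_mod_cast congrArg (Nat.cast (R := ℤ)) hc
    have harg : m + t + ν = t + (m + ν) := by omega
    rw [pow_add, harg]
    calc (-1 : ℤ) ^ m * (-1) ^ t * ((2 * m).choose (m + t)) * ((m + t).choose m * ((t + (m + ν)).choose m))
        = ((-1 : ℤ) ^ m * (-1) ^ t * ((t + (m + ν)).choose m)) * (((2 * m).choose (m + t) : ℤ) * ((m + t).choose m)) := by ring
      _ = ((-1 : ℤ) ^ m * (-1) ^ t * ((t + (m + ν)).choose m)) * (((2 * m).choose m : ℤ) * (m.choose t : ℤ)) := by rw [hcast]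
      _ = ((2 * m).choose m : ℤ) * ((-1) ^ m * ((-1 : ℤ) ^ t * (m.choose t) * ((t + (m + ν)).choose m))) := by ring
  rw [Finset.sum_congr rfl hterm, ← Finset.mul_sum, ← Finset.mul_sum, aux2 m (m + ν)]
  have hm : ((-1 : ℤ) ^ m) * ((-1 : ℤ) ^ m) = 1 := by rw [← pow_add]; exact Even.neg_one_pow ⟨m, rfl⟩
  rw [hm, mul_one]
lemma key_dvd (ν r : ℕ)
    (h : ∀ k j : ℕ, j ≤ k → ∃ z : ℤ, (r : ℚ) * A ν k j = (z : ℚ)) (m : ℕ) :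
    (ν + m).choose m ∣ r * (2 * m).choose m := by
  classical
  -- integer witnesses
  have hw : ∀ k : ℕ, ∃ z : ℤ, (r : ℚ) * A ν k m = (z : ℚ) := by
    intro k
    rcases lt_or_ge k m with hk | hk
    · exact ⟨0, by simp [A_eq_zero hk]⟩
    · exact h k m hk
  choose w hwspec using hw
  set z : ℤ := ∑ k ∈ range (2 * m + 1), (-1 : ℤ) ^ k * ((2 * m).choose k) * w k with hz
  have hC : (((ν + m).choose m : ℚ)) ≠ 0 := by
    exact_mod_cast (Nat.choose_pos (Nat.le_add_left m ν)).ne'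
  -- the rational sum identity
  have hsum : (z : ℚ) * ((ν + m).choose m : ℚ) = (r : ℚ) * ((2 * m).choose m : ℚ) := by
    have h1 : (z : ℚ) = ∑ k ∈ range (2 * m + 1),
        (-1 : ℚ) ^ k * ((2 * m).choose k : ℚ) * ((r : ℚ) * A ν k m) := by
      rw [hz]; push_cast
      refine Finset.sum_congr rfl ?_
      intro k _
      rw [← hwspec k]
    have h2 : (z : ℚ) * ((ν + m).choose m : ℚ)
        = (r : ℚ) * ∑ k ∈ range (2 * m + 1),
            (-1 : ℚ) ^ k * ((2 * m).choose k : ℚ) * ((k.choose m : ℚ) * ((k + ν).choose m : ℚ)) := by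
      rw [h1, Finset.sum_mul, Finset.mul_sum]
      refine Finset.sum_congr rfl ?_
      intro k _
      rw [← A_mul_choose ν k m]; ring
    have h3 : ∑ k ∈ range (2 * m + 1),
        (-1 : ℚ) ^ k * ((2 * m).choose k : ℚ) * ((k.choose m : ℚ) * ((k + ν).choose m : ℚ))
        = ((2 * m).choose m : ℚ) := by
      exact_mod_cast congrArg (fun t : ℤ => (t : ℚ)) (idZ ν m)
    rw [h2, h3]
  -- conclude divisibility over ℤ then ℕ
  have hdvd : ((ν + m).choose m : ℤ) ∣ (r : ℤ) * ((2 * m).choose m : ℤ) := by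
    refine ⟨z, ?_⟩
    have : ((r : ℤ) * ((2 * m).choose m : ℤ) : ℚ) = (((ν + m).choose m : ℤ) * z : ℚ) := by
      push_cast
      rw [← hsum]; ring
    exact_mod_cast this
  exact_mod_cast hdvd
-- (a-1) % q = a % q - 1 when a % q ≠ 0
lemma pred_mod {a q : ℕ} (hq : 0 < q) (h : a % q ≠ 0) : (a - 1) % q = a % q - 1 := by
  have hb := Nat.div_add_mod a q
  have hbq : q * (a / q) = (a / q) * q := Nat.mul_comm _ _
  have hlt : a % q < q := Nat.mod_lt a hq
  have h1 : a - 1 = (a % q - 1) + (a / q) * q := by omega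
  rw [h1, Nat.add_mul_mod_self_right, Nat.mod_eq_of_lt (by omega : a % q - 1 < q)]

lemma odd_prime_case (p ν r : ℕ) (hp : p.Prime) (hp2 : p ≠ 2) (hν : 1 ≤ ν) (hr : r ≠ 0)
    (D : ∀ m : ℕ, (ν + m).choose m ∣ r * (2 * m).choose m) :
    padicValNat p ((2 * ν - 1).choose ν) ≤ padicValNat p r := by
  haveI : Fact p.Prime := ⟨hp⟩
  set N := Nat.log p (2 * ν) + 1 with hN
  have hpow : 2 * ν < p ^ N := Nat.lt_pow_succ_log_self hp.one_lt _
  have hodd : Odd (p ^ N) := (hp.odd_of_ne_two hp2).pow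
  obtain ⟨m, hm⟩ := hodd
  have hm' : p ^ N = 2 * m + 1 := by omega
  have hνm : ν ≤ m := by omega
  have hm1 : 1 ≤ m := by omega
  -- key modular fact
  have hmod : ∀ i, 1 ≤ i → i < N → p ^ i = 2 * (m % p ^ i) + 1 := by
    intro i _ hiN
    set q := p ^ i with hqdef
    have hq0 : 0 < q := pow_pos hp.pos i
    have hdvd : q ∣ p ^ N := pow_dvd_pow p (le_of_lt hiN)
    have hmodd : (2 * m + 1) % q = (2 * (m % q) + 1) % q := by
      have hb := Nat.div_add_mod m q
      have hbq : q * (m / q) = (m / q) * q := Nat.mul_comm _ _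
      have h1 : 2 * m + 1 = 2 * (m % q) + 1 + (2 * (m / q)) * q := by
        have : (2 * (m / q)) * q = 2 * ((m / q) * q) := by ring
        omega
      rw [h1, Nat.add_mul_mod_self_right]
    have hz : (2 * (m % q) + 1) % q = 0 := by
      rw [← hmodd, ← hm', Nat.mod_eq_zero_of_dvd hdvd]
    obtain ⟨c, hc⟩ := Nat.dvd_of_mod_eq_zero hz
    have hmq : m % q < q := Nat.mod_lt m hq0
    match c with
    | 0 => omega
    | 1 => omega
    | (c + 2) =>
      exfalso
      have : q * 2 ≤ q * (c + 2) := Nat.mul_le_mul_left q (by omega)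
      omega
  -- p does not divide C(2m, m)
  have hv1 : padicValNat p ((2 * m).choose m) = 0 := by
    rw [padicValNat_choose (by omega : m ≤ 2 * m)
      (show Nat.log p (2 * m) < N from Nat.log_lt_of_lt_pow (by omega) (by omega))]
    rw [Finset.card_eq_zero, Finset.filter_eq_empty_iff]
    intro i hi
    rw [Finset.mem_Ico] at hi
    have := hmod i hi.1 hi.2
    have h2 : 2 * m - m = m := by omega
    rw [h2]
    have hmq : m % p ^ i < p ^ i := Nat.mod_lt m (pow_pos hp.pos i)
    omega
  -- e ≤ v(C(ν+m, m))
  have hv2 : padicValNat p ((2 * ν - 1).choose ν) ≤ padicValNat p ((ν + m).choose m) := by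
    rw [padicValNat_choose (by omega : ν ≤ 2 * ν - 1)
      (show Nat.log p (2 * ν - 1) < N from Nat.log_lt_of_lt_pow (by omega) (by omega)),
      padicValNat_choose (by omega : m ≤ ν + m)
      (show Nat.log p (ν + m) < N from Nat.log_lt_of_lt_pow (by omega) (by omega))]
    apply Finset.card_le_card
    intro i hi
    rw [Finset.mem_filter, Finset.mem_Ico] at hi ⊢
    obtain ⟨⟨hi1, hi2⟩, hcar⟩ := hi
    refine ⟨⟨hi1, hi2⟩, ?_⟩
    set q := p ^ i with hqdef
    have hq0 : 0 < q := pow_pos hp.pos i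
    have hqm : q = 2 * (m % q) + 1 := hmod i hi1 hi2
    have hsub : 2 * ν - 1 - ν = ν - 1 := by omega
    rw [hsub] at hcar
    have hsub2 : ν + m - m = ν := by omega
    rw [hsub2]
    have hνq : ν % q < q := Nat.mod_lt ν hq0
    by_cases hz : ν % q = 0
    · have : (ν - 1) % q < q := Nat.mod_lt _ hq0
      omega
    · have hpred : (ν - 1) % q = ν % q - 1 := pred_mod hq0 hz
      omega
  -- combine with divisibility
  obtain ⟨c, hc⟩ := D m
  have hC2 : (2 * m).choose m ≠ 0 := (Nat.choose_pos (by omega)).ne'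
  have hCν : (ν + m).choose m ≠ 0 := (Nat.choose_pos (by omega)).ne'
  have hc0 : c ≠ 0 := by
    intro h0; rw [h0, mul_zero] at hc; exact (mul_ne_zero hr hC2) hc
  have hval : padicValNat p (r * (2 * m).choose m) = padicValNat p ((ν + m).choose m) + padicValNat p c := by
    rw [hc, padicValNat.mul hCν hc0]
  rw [padicValNat.mul hr hC2, hv1, add_zero] at hval
  omega
def sdig (n : ℕ) : ℕ := (Nat.digits 2 n).sum

lemma L1 (n : ℕ) : padicValNat 2 (n !) + sdig n = n := by
  simp only [sdig]
  haveI : Fact (Nat.Prime 2) := ⟨Nat.prime_two⟩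
  have h := sub_one_mul_padicValNat_factorial (p := 2) n
  have h2 := Nat.digit_sum_le 2 n
  omega

lemma L2 (n : ℕ) : sdig (2 * n) = sdig n := by
  simp only [sdig]
  rcases Nat.eq_zero_or_pos n with rfl | hn
  · simp
  · rw [Nat.digits_def' (by norm_num : 1 < 2) (by omega : 0 < 2 * n)]
    simp [Nat.mul_div_cancel_left n (by norm_num : 0 < 2), Nat.mul_mod_right]

lemma L3 (n : ℕ) : sdig (2 * n + 1) = sdig n + 1 := by
  simp only [sdig]
  rw [Nat.digits_def' (by norm_num : 1 < 2) (by omega : 0 < 2 * n + 1)]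
  have h1 : (2 * n + 1) % 2 = 1 := by omega
  have h2 : (2 * n + 1) / 2 = n := by omega
  rw [h1, h2]
  simp [add_comm]

lemma L4 (N : ℕ) : sdig (2 ^ N) = 1 := by
  simp only [sdig]
  induction N with
  | zero => simp
  | succ N ih => rw [pow_succ, mul_comm]; rw [show ((Nat.digits 2 (2 * 2 ^ N)).sum) = sdig (2 * 2 ^ N) from rfl, L2]; exact ih

lemma CV {n k : ℕ} (h : k ≤ n) :
    padicValNat 2 (n.choose k) + padicValNat 2 (k !) + padicValNat 2 ((n - k)!) =
      padicValNat 2 (n !) := by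
  haveI : Fact (Nat.Prime 2) := ⟨Nat.prime_two⟩
  have hid := Nat.choose_mul_factorial_mul_factorial h
  have h1 : padicValNat 2 (n.choose k * k ! * (n - k)!) =
      padicValNat 2 (n.choose k) + padicValNat 2 (k !) + padicValNat 2 ((n - k)!) := by
    rw [padicValNat.mul (mul_ne_zero (Nat.choose_pos h).ne' (Nat.factorial_ne_zero _))
      (Nat.factorial_ne_zero _),
      padicValNat.mul (Nat.choose_pos h).ne' (Nat.factorial_ne_zero _)]
  rw [← h1, hid]

lemma two_case (ν r : ℕ) (hν : 1 ≤ ν) (hr : r ≠ 0)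
    (D : ∀ m : ℕ, (ν + m).choose m ∣ r * (2 * m).choose m) :
    padicValNat 2 ((2 * ν - 1).choose ν) ≤ padicValNat 2 r := by
  haveI : Fact (Nat.Prime 2) := ⟨Nat.prime_two⟩
  set N := Nat.log 2 (2 * ν) + 1 with hN
  have hpow : 2 * ν < 2 ^ N := Nat.lt_pow_succ_log_self (by norm_num) _
  set m := 2 ^ N - ν with hm
  have hνm : ν ≤ m := by omega
  have hsum : ν + m = 2 ^ N := by omega
  -- e = sdig ν - 1
  have he : padicValNat 2 ((2 * ν - 1).choose ν) + 1 = sdig ν := by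
    have hcv := CV (show ν ≤ 2 * ν - 1 by omega)
    have hsub : 2 * ν - 1 - ν = ν - 1 := by omega
    rw [hsub] at hcv
    have l1 := L1 ν; have l2 := L1 (ν - 1); have l3 := L1 (2 * ν - 1)
    have l4 : sdig (2 * ν - 1) = sdig (ν - 1) + 1 := by
      have : 2 * (ν - 1) + 1 = 2 * ν - 1 := by omega
      rw [← this, L3]
    omega
  -- v1 = sdig m
  have hv1 : padicValNat 2 ((2 * m).choose m) = sdig m := by
    have hcv := CV (show m ≤ 2 * m by omega)
    have hsub : 2 * m - m = m := by omega
    rw [hsub] at hcv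
    have l1 := L1 m; have l2 := L1 (2 * m); have l3 := L2 m
    omega
  -- v2 = sdig m + sdig ν - 1
  have hv2 : padicValNat 2 ((ν + m).choose m) + 1 = sdig m + sdig ν := by
    have hcv := CV (show m ≤ ν + m by omega)
    have hsub : ν + m - m = ν := by omega
    rw [hsub] at hcv
    have l1 := L1 m; have l2 := L1 ν; have l3 := L1 (ν + m)
    have l4 : sdig (ν + m) = 1 := by rw [hsum]; exact L4 N
    omega
  -- combine
  obtain ⟨c, hc⟩ := D m
  have hC2 : (2 * m).choose m ≠ 0 := (Nat.choose_pos (by omega)).ne'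
  have hCν : (ν + m).choose m ≠ 0 := (Nat.choose_pos (by omega)).ne'
  have hc0 : c ≠ 0 := by
    intro h0; rw [h0, mul_zero] at hc; exact (mul_ne_zero hr hC2) hc
  have hval : padicValNat 2 (r * (2 * m).choose m) =
      padicValNat 2 ((ν + m).choose m) + padicValNat 2 c := by
    rw [hc, padicValNat.mul hCν hc0]
  rw [padicValNat.mul hr hC2] at hval
  omega

/-- For every `ν ≥ 1` and every positive integer `r` such that `r·A_{k,j}(ν)` is an
integer for all `j ≤ k`, the binomial coefficient `C(2ν−1, ν)` divides `r`. -/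
theorem stmt2 (ν : ℕ) (hν : 1 ≤ ν) (r : ℕ) (hr : 0 < r)
    (h : ∀ k j : ℕ, j ≤ k → ∃ z : ℤ, (r : ℚ) * A ν k j = (z : ℚ)) :
    Nat.choose (2 * ν - 1) ν ∣ r := by
  have hr' : r ≠ 0 := hr.ne'
  have D : ∀ m : ℕ, (ν + m).choose m ∣ r * (2 * m).choose m := key_dvd ν r h
  have hC : (2 * ν - 1).choose ν ≠ 0 := (Nat.choose_pos (by omega)).ne'
  rw [← Nat.factorization_le_iff_dvd hC hr']
  refine Finsupp.le_def.mpr ?_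
  intro p
  by_cases hp : p.Prime
  · rw [Nat.factorization_def _ hp, Nat.factorization_def _ hp]
    by_cases hp2 : p = 2
    · subst hp2
      exact two_case ν r hν hr' D
    · exact odd_prime_case p ν r hp hp2 hν hr' D
  · simp [Nat.factorization_eq_zero_of_not_prime _ hp]
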